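/- Let p be an odd prime with p ∤ ab and e ≥ 1, and let 0 ≤ T < k. Then p^e is (T,k)-good with respect to (a,b) if and only if there exists a positive integer α such that: (1) ν₂(ord_p(a·b⁻¹)) = α; (2) T ≡ 2^(α−1) (mod 2^min(ν₂(k),α)); and (3) gcd(k/2^(ν₂(k)), ord_{p^e}(a·b⁻¹)/2^α) divides T. -/

import Mathlib

lemma lin_cong (k M c : ℤ) (h : (Int.gcd k M : ℤ) ∣ c) : ∃ s : ℤ, M ∣ k * s - c := by
  obtain ⟨q, hq⟩ := h
  refine ⟨Int.gcdA k M * q, -(Int.gcdB k M * q), ?_⟩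
  have hb := Int.gcd_eq_gcd_ab k M
  rw [hq, hb]; ring

lemma crt_int (M1 M2 s1 s2 : ℤ) (h : IsCoprime M1 M2) :
    ∃ s : ℤ, M1 ∣ s - s1 ∧ M2 ∣ s - s2 := by
  obtain ⟨x, y, hxy⟩ := h
  refine ⟨s2*x*M1 + s1*y*M2, ⟨(s2-s1)*x, ?_⟩, ⟨(s1-s2)*y, ?_⟩⟩
  · linear_combination s1 * hxy
  · linear_combination s2 * hxy

lemma lift_pow (p : ℕ) (x : ℤ) (i : ℕ) (hi : 1 ≤ i)
    (h : (p:ℤ)^i ∣ x - 1) : (p:ℤ)^(i+1) ∣ x^p - 1 := by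
  have hp1 : (p:ℤ) ∣ x - 1 := dvd_trans (dvd_pow_self _ (by omega : i ≠ 0)) h
  have hsum : (p:ℤ) ∣ ∑ j ∈ Finset.range p, x ^ j := by
    have h1 : (p:ℤ) ∣ (∑ j ∈ Finset.range p, x ^ j) - p := by
      have he : (∑ j ∈ Finset.range p, x ^ j) - p = ∑ j ∈ Finset.range p, (x ^ j - 1) := by
        rw [Finset.sum_sub_distrib]; simp
      rw [he]
      refine Finset.dvd_sum fun j _ => dvd_trans hp1 ?_
      simpa using sub_dvd_pow_sub_pow x 1 j
    have := dvd_add h1 (dvd_refl (p:ℤ))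
    simpa using this
  have key : x ^ p - 1 = (∑ j ∈ Finset.range p, x ^ j) * (x - 1) := (geom_sum_mul x p).symm
  rw [key, pow_succ']
  exact mul_dvd_mul hsum h

lemma lift_pow_iter (p : ℕ) (y : ℤ) (h : (p:ℤ) ∣ y - 1) (j : ℕ) :
    (p:ℤ)^(j+1) ∣ y^(p^j) - 1 := by
  induction j with
  | zero => simpa using h
  | succ j ih =>
      have := lift_pow p (y^(p^j)) (j+1) (by omega) ih
      rwa [← pow_mul, ← pow_succ] at this

lemma isUnit_of_coprime_int (N : ℕ) (x : ℤ) (h : IsCoprime (N:ℤ) x) : IsUnit (x : ZMod N) := by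
  obtain ⟨u, v, huv⟩ := h
  have : (v : ZMod N) * (x : ZMod N) = 1 := by
    have := congrArg (Int.cast : ℤ → ZMod N) huv
    push_cast at this
    simpa [ZMod.natCast_self] using this
  exact IsUnit.of_mul_eq_one _ (by rw [mul_comm] at this; exact this)

lemma my_pow_eq_neg_one_iff (N : ℕ) (a b : ℤ) (hbu : IsUnit (b : ZMod N)) (m : ℕ) :
    ((a : ZMod N)^m + (b : ZMod N)^m = 0) ↔ ((a : ZMod N) * (b : ZMod N)⁻¹) ^ m = -1 := by
  have hc : (b:ZMod N) * (b:ZMod N)⁻¹ = 1 := ZMod.mul_inv_of_unit _ hbu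
  constructor
  · intro h
    have h2 := congrArg (· * ((b:ZMod N)⁻¹)^m) h
    simp only [add_mul, zero_mul] at h2
    have h3 : (a:ZMod N)^m * ((b:ZMod N)⁻¹)^m + 1 = 0 := by
      rw [← h2]; congr 1; rw [← mul_pow, hc, one_pow]
    rw [mul_pow]
    linear_combination h3
  · intro h
    have h2 := congrArg (· * ((b:ZMod N))^m) h
    simp only [mul_pow] at h2
    have h3 : (a:ZMod N)^m * (((b:ZMod N)⁻¹)^m * (b:ZMod N)^m) = -1 * (b:ZMod N)^m := by
      rw [← h2]; ring
    rw [← mul_pow, mul_comm _ (b:ZMod N), hc, one_pow, mul_one] at h3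
    linear_combination h3

lemma sq_eq_one_zmod (p : ℕ) (hp : p.Prime) (hodd : Odd p) (e : ℕ) (he : 1 ≤ e)
    (x : ZMod (p^e)) (h : x^2 = 1) : x = 1 ∨ x = -1 := by
  haveI : NeZero (p^e) := ⟨pow_ne_zero _ hp.pos.ne'⟩
  set t : ℤ := ZMod.cast x with ht
  have hxt : ((t : ℤ) : ZMod (p^e)) = x := ZMod.intCast_zmod_cast x
  have hdvd : ((p:ℤ))^e ∣ (t - 1) * (t + 1) := by
    have : ((t^2 - 1 : ℤ) : ZMod (p^e)) = 0 := by push_cast [hxt, h]; ring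
    rw [ZMod.intCast_zmod_eq_zero_iff_dvd] at this
    have h2 : ((p^e : ℕ) : ℤ) = (p:ℤ)^e := by push_cast; ring
    rw [h2] at this
    calc ((p:ℤ))^e ∣ t^2 - 1 := this
    _ = (t - 1) * (t + 1) := by ring
  have hpint : Prime (p:ℤ) := Nat.prime_iff_prime_int.mp hp
  have hnot2 : ¬ ((p:ℤ) ∣ 2) := by
    intro hd
    have h1 : (p:ℕ) ∣ 2 := by exact_mod_cast hd
    have h2 : p = 2 := (Nat.prime_dvd_prime_iff_eq hp Nat.prime_two).mp h1
    rw [Nat.odd_iff, h2] at hodd; omega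
  by_cases hd : (p:ℤ) ∣ t + 1
  · have hnd : ¬ (p:ℤ) ∣ t - 1 := fun hdd => hnot2 (by
      have := dvd_sub hd hdd; simpa using this)
    have : (p:ℤ)^e ∣ t + 1 := by
      rw [mul_comm] at hdvd
      exact Prime.pow_dvd_of_dvd_mul_right hpint e hnd hdvd
    right
    have : ((t + 1 : ℤ) : ZMod (p^e)) = 0 := by
      rw [ZMod.intCast_zmod_eq_zero_iff_dvd]; push_cast; exact this
    push_cast [hxt] at this
    linear_combination this
  · have : (p:ℤ)^e ∣ t - 1 := Prime.pow_dvd_of_dvd_mul_right hpint e hd hdvd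
    left
    have : ((t - 1 : ℤ) : ZMod (p^e)) = 0 := by
      rw [ZMod.intCast_zmod_eq_zero_iff_dvd]; push_cast; exact this
    push_cast [hxt] at this
    linear_combination this


lemma order_pos_of_isUnit (N : ℕ) (hN : N ≠ 0) (u : ZMod N) (hu : IsUnit u) : 0 < orderOf u := by
  haveI : NeZero N := ⟨hN⟩
  have h1 : orderOf ((hu.unit : (ZMod N)ˣ) : ZMod N) = orderOf hu.unit := orderOf_units
  rw [IsUnit.unit_spec] at h1
  rw [h1]
  exact orderOf_pos _

lemma order_dvd_lift (p : ℕ) (hp : p.Prime) (e : ℕ) (he : 1 ≤ e) (u : ZMod (p^e))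
    (up : ZMod p) (hmap : (ZMod.castHom (dvd_pow_self p (by omega : e ≠ 0)) (ZMod p)) u = up) :
    orderOf up ∣ orderOf u ∧ orderOf u ∣ orderOf up * p^(e-1) := by
  set φ := ZMod.castHom (dvd_pow_self p (by omega : e ≠ 0)) (ZMod p) with hφ
  constructor
  · have := orderOf_map_dvd φ.toMonoidHom u
    simpa [hmap] using this
  · rw [orderOf_dvd_iff_pow_eq_one]
    set t : ℤ := ZMod.cast u with ht
    have hxt : ((t : ℤ) : ZMod (p^e)) = u := ZMod.intCast_zmod_cast u
    have htp : ((t : ℤ) : ZMod p) = up := by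
      have : φ ((t : ℤ) : ZMod (p^e)) = ((t:ℤ) : ZMod p) := map_intCast φ t
      rw [hxt, hmap] at this; exact this.symm
    have h1 : (p:ℤ) ∣ t ^ orderOf up - 1 := by
      rw [← ZMod.intCast_zmod_eq_zero_iff_dvd]
      push_cast [htp]
      rw [pow_orderOf_eq_one]; ring
    have h2 := lift_pow_iter p (t ^ orderOf up) h1 (e-1)
    rw [(by omega : e - 1 + 1 = e)] at h2
    have h3 : ((t ^ (orderOf up * p^(e-1)) - 1 : ℤ) : ZMod (p^e)) = 0 := by
      rw [ZMod.intCast_zmod_eq_zero_iff_dvd]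
      push_cast
      rw [pow_mul]
      exact h2
    push_cast [hxt] at h3
    rw [sub_eq_zero] at h3
    exact h3

lemma nu2_eq (p : ℕ) (hp : p.Prime) (hodd : Odd p) (e np n : ℕ) (hnp : 0 < np) (hn : 0 < n)
    (h1 : np ∣ n) (h2 : n ∣ np * p^(e-1)) :
    padicValNat 2 n = padicValNat 2 np := by
  have hf2 : ∀ m : ℕ, m ≠ 0 → Nat.factorization m 2 = padicValNat 2 m :=
    fun m _ => Nat.factorization_def m Nat.prime_two
  have hp2 : p ≠ 2 := by rintro rfl; rw [Nat.odd_iff] at hodd; omega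
  have hcop : (Nat.Coprime 2 (p^(e-1))) := Nat.Coprime.pow_right _
    ((Nat.coprime_primes Nat.prime_two hp).mpr (Ne.symm hp2))
  have hle1 : padicValNat 2 np ≤ padicValNat 2 n := by
    have : 2 ^ padicValNat 2 np ∣ n := by
      refine dvd_trans ?_ h1
      rw [← hf2 np hnp.ne']
      exact Nat.ordProj_dvd np 2
    rw [(Nat.Prime.pow_dvd_iff_le_factorization Nat.prime_two hn.ne'), hf2 n hn.ne'] at this
    exact this
  have hle2 : padicValNat 2 n ≤ padicValNat 2 np := by
    have hd : 2 ^ padicValNat 2 n ∣ np * p^(e-1) := by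
      refine dvd_trans ?_ h2
      rw [← hf2 n hn.ne']
      exact Nat.ordProj_dvd n 2
    have hd2 : 2 ^ padicValNat 2 n ∣ np :=
      (Nat.Coprime.pow_left _ hcop).dvd_of_dvd_mul_right hd
    rw [(Nat.Prime.pow_dvd_iff_le_factorization Nat.prime_two hnp.ne'), hf2 np hnp.ne'] at hd2
    exact hd2
  omega



lemma helper_mod (α m : ℕ) (hα : 0 < α) (h1 : 2^(α-1) ∣ m) (h2 : ¬ 2^α ∣ m) :
    (2^α : ℤ) ∣ (m:ℤ) - 2^(α-1) := by
  obtain ⟨γ, rfl⟩ : ∃ γ, α = γ + 1 := ⟨α - 1, by omega⟩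
  simp only [Nat.add_sub_cancel] at *
  obtain ⟨m', hm'⟩ := h1
  have hodd : ¬ 2 ∣ m' := by
    rintro ⟨j, rfl⟩
    exact h2 ⟨j, by rw [hm', pow_succ]; ring⟩
  obtain ⟨j, hj⟩ : ∃ j, m' = 2*j + 1 := ⟨m'/2, by omega⟩
  refine ⟨j, ?_⟩
  have : (m:ℤ) = 2^γ * (2*j+1) := by rw [hm', hj]; push_cast; ring
  rw [this, pow_succ]; ring

lemma helper_mod' (α m : ℕ) (hα : 0 < α) (h : (2^α : ℤ) ∣ (m:ℤ) - 2^(α-1)) :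
    2^(α-1) ∣ m ∧ ¬ 2^α ∣ m := by
  obtain ⟨γ, rfl⟩ : ∃ γ, α = γ + 1 := ⟨α - 1, by omega⟩
  simp only [Nat.add_sub_cancel] at *
  obtain ⟨c, hc⟩ := h
  have hm : (m:ℤ) = 2^γ * (2*c+1) := by rw [pow_succ] at hc; linarith
  constructor
  · have h1 : ((2^γ : ℕ) : ℤ) ∣ ((m:ℕ) : ℤ) := by push_cast; exact ⟨2*c+1, hm⟩
    exact_mod_cast h1
  · intro hd
    have hd' : ((2:ℤ)^(γ+1)) ∣ (m:ℤ) := by exact_mod_cast hd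
    have h2 : ((2:ℤ)^(γ+1)) ∣ (2:ℤ)^γ := by
      have := dvd_sub hd' ⟨c, hc⟩
      simpa using this
    have h3 := Int.le_of_dvd (by positivity) h2
    have h4 : (0:ℤ) < 2^γ := by positivity
    rw [pow_succ] at h3
    linarith

/-- `p^e` is `(T,k)`-good w.r.t. `(a,b)` iff there is a positive `α`
with (1) `ν₂(ord_p(a·b⁻¹)) = α`; (2) `T ≡ 2^(α-1) (mod 2^min(ν₂(k),α))`; and
(3) `gcd(k/2^(ν₂(k)), ord_{p^e}(a·b⁻¹)/2^α) ∣ T`. -/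
theorem stmt_4 (a b : ℤ) (ha : a ≠ 0) (hb : b ≠ 0) (hab : IsCoprime a b)
    (p : ℕ) (hp : p.Prime) (hodd : Odd p) (hpab : ¬ (p : ℤ) ∣ a * b)
    (e : ℕ) (he : 1 ≤ e) (k T : ℕ) (hT : T < k) :
    (∃ s : ℕ, 0 < s ∧ ((p : ℤ) ^ e) ∣ a ^ (k * s + T) + b ^ (k * s + T)) ↔
      ∃ α : ℕ, 0 < α ∧
        padicValNat 2 (orderOf ((a : ZMod p) * (b : ZMod p)⁻¹)) = α ∧
        T ≡ 2 ^ (α - 1) [MOD 2 ^ (min (padicValNat 2 k) α)] ∧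
        Nat.gcd (k / 2 ^ (padicValNat 2 k))
          (orderOf ((a : ZMod (p ^ e)) * (b : ZMod (p ^ e))⁻¹) / 2 ^ α) ∣ T := by
  haveI hNe : NeZero (p^e) := ⟨pow_ne_zero _ hp.pos.ne'⟩
  haveI hNp : NeZero p := ⟨hp.pos.ne'⟩
  have hp2 : p ≠ 2 := by rintro rfl; rw [Nat.odd_iff] at hodd; omega
  have hpa : ¬ (p:ℤ) ∣ a := fun h => hpab (h.mul_right b)
  have hpb : ¬ (p:ℤ) ∣ b := fun h => hpab (h.mul_left a)
  have hpprime : Prime (p:ℤ) := Nat.prime_iff_prime_int.mp hp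
  have hcopb : IsCoprime ((p^e : ℕ):ℤ) b := by
    push_cast
    exact IsCoprime.pow_left ((hpprime.coprime_iff_not_dvd).mpr hpb)
  have hcopa : IsCoprime ((p^e : ℕ):ℤ) a := by
    push_cast
    exact IsCoprime.pow_left ((hpprime.coprime_iff_not_dvd).mpr hpa)
  have hbu : IsUnit ((b : ZMod (p^e))) := isUnit_of_coprime_int _ _ hcopb
  have hau : IsUnit ((a : ZMod (p^e))) := isUnit_of_coprime_int _ _ hcopa
  have hbu_p : IsUnit ((b : ZMod p)) := isUnit_of_coprime_int _ _
    (by push_cast; exact (hpprime.coprime_iff_not_dvd).mpr hpb)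
  have hau_p : IsUnit ((a : ZMod p)) := isUnit_of_coprime_int _ _
    (by push_cast; exact (hpprime.coprime_iff_not_dvd).mpr hpa)
  set u : ZMod (p^e) := (a : ZMod (p^e)) * (b : ZMod (p^e))⁻¹ with hu_def
  set up : ZMod p := (a : ZMod p) * (b : ZMod p)⁻¹ with hup_def
  have hbinv : (b : ZMod (p^e)) * (b : ZMod (p^e))⁻¹ = 1 := ZMod.mul_inv_of_unit _ hbu
  have hbinv_p : (b : ZMod p) * (b : ZMod p)⁻¹ = 1 := ZMod.mul_inv_of_unit _ hbu_p
  have huu : IsUnit u := hau.mul (IsUnit.of_mul_eq_one _ (by rw [mul_comm]; exact hbinv))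
  have hupu : IsUnit up := hau_p.mul (IsUnit.of_mul_eq_one _ (by rw [mul_comm]; exact hbinv_p))
  have hub : u * (b : ZMod (p^e)) = (a : ZMod (p^e)) := by
    rw [hu_def, mul_assoc, mul_comm ((b : ZMod (p^e)))⁻¹, hbinv, mul_one]
  have hupb : up * (b : ZMod p) = (a : ZMod p) := by
    rw [hup_def, mul_assoc, mul_comm ((b : ZMod p))⁻¹, hbinv_p, mul_one]
  have hmap : (ZMod.castHom (dvd_pow_self p (by omega : e ≠ 0)) (ZMod p)) u = up := by
    set φ := ZMod.castHom (dvd_pow_self p (by omega : e ≠ 0)) (ZMod p) with hφ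
    have h1 : φ u * (b : ZMod p) = (a : ZMod p) := by
      have h0 := congrArg φ hub
      rwa [map_mul, map_intCast, map_intCast] at h0
    have h2 : φ u * (b : ZMod p) = up * (b : ZMod p) := h1.trans hupb.symm
    have h3 := congrArg (· * ((b:ZMod p))⁻¹) h2
    simp only [mul_assoc, hbinv_p, mul_one] at h3
    exact h3
  set n := orderOf u with hn_def
  set np := orderOf up with hnp_def
  have hn_pos : 0 < n := order_pos_of_isUnit _ (pow_ne_zero _ hp.pos.ne') u huu
  have hnp_pos : 0 < np := order_pos_of_isUnit _ hp.pos.ne' up hupu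
  obtain ⟨hdvd1, hdvd2⟩ := order_dvd_lift p hp e he u up hmap
  have hν : padicValNat 2 n = padicValNat 2 np := nu2_eq p hp hodd e np n hnp_pos hn_pos hdvd1 hdvd2
  have hN3 : 2 < p^e := lt_of_lt_of_le (show 2 < p by have := hp.two_le; omega) (Nat.le_self_pow (by omega) p)
  haveI : Fact (2 < p^e) := ⟨hN3⟩
  have hneg : (-1 : ZMod (p^e)) ≠ 1 := ZMod.neg_one_ne_one
  have hcrit : ∀ m : ℕ, (((p:ℤ)^e) ∣ a^m + b^m) ↔ (u ^ m = -1) := by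
    intro m
    rw [show ((p:ℤ)^e) = ((p^e : ℕ) : ℤ) by push_cast; ring,
      ← ZMod.intCast_zmod_eq_zero_iff_dvd]
    push_cast
    exact my_pow_eq_neg_one_iff (p^e) a b hbu m
  have hcrit2 : ∀ m : ℕ, u ^ m = -1 ↔ (n ∣ 2*m ∧ ¬ n ∣ m) := by
    intro m
    constructor
    · intro h
      refine ⟨?_, ?_⟩
      · rw [orderOf_dvd_iff_pow_eq_one, mul_comm, pow_mul, h]; ring
      · intro hd
        rw [orderOf_dvd_iff_pow_eq_one, h] at hd
        exact hneg hd
    · rintro ⟨h1, h2⟩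
      have hsq : (u^m)^2 = 1 := by
        rw [← pow_mul, mul_comm, ← orderOf_dvd_iff_pow_eq_one]; exact h1
      rcases sq_eq_one_zmod p hp hodd e he (u^m) hsq with h | h
      · exact absurd (orderOf_dvd_iff_pow_eq_one.mpr h) h2
      · exact h
  have hk_pos : 0 < k := by omega
  set β := padicValNat 2 k with hβ_def
  set k₁ := k / 2^β with hk₁_def
  have hkfac : 2^β * k₁ = k := by
    rw [hk₁_def, hβ_def, ← Nat.factorization_def k Nat.prime_two]
    exact Nat.ordProj_mul_ordCompl_eq_self k 2
  have hk1_odd : ¬ 2 ∣ k₁ := by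
    rw [hk₁_def, hβ_def, ← Nat.factorization_def k Nat.prime_two]
    exact Nat.not_dvd_ordCompl Nat.prime_two hk_pos.ne'
  constructor
  · rintro ⟨s, hs_pos, hdvds⟩
    set m := k * s + T with hm_def
    have hks1 : 1 ≤ k * s := Nat.mul_pos hk_pos hs_pos
    have hm_pos : 0 < m := by omega
    have hu_m : u ^ m = -1 := (hcrit m).mp hdvds
    obtain ⟨h1, h2⟩ := (hcrit2 m).mp hu_m
    set α := padicValNat 2 n with hα_def
    set n₁ := n / 2^α with hn₁_def
    have hnfac : 2^α * n₁ = n := by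
      rw [hn₁_def, hα_def, ← Nat.factorization_def n Nat.prime_two]
      exact Nat.ordProj_mul_ordCompl_eq_self n 2
    have hn1_odd : ¬ 2 ∣ n₁ := by
      rw [hn₁_def, hα_def, ← Nat.factorization_def n Nat.prime_two]
      exact Nat.not_dvd_ordCompl Nat.prime_two hn_pos.ne'
    have hα_pos : 0 < α := by
      rcases Nat.eq_zero_or_pos α with h0 | hgt
      · exfalso
        have hnodd : ¬ 2 ∣ n := by
          intro h2d
          have hle : 1 ≤ n.factorization 2 :=
            (Nat.Prime.pow_dvd_iff_le_factorization Nat.prime_two hn_pos.ne').mp (by simpa using h2d)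
          rw [Nat.factorization_def n Nat.prime_two] at hle
          omega
        have hcop : Nat.Coprime n 2 := ((Nat.prime_two.coprime_iff_not_dvd).mpr hnodd).symm
        exact h2 (hcop.dvd_of_dvd_mul_left h1)
      · exact hgt
    have hn1_dvd_m : n₁ ∣ m := by
      have hd : n₁ ∣ 2 * m := dvd_trans ⟨2^α, by rw [← hnfac]; ring⟩ h1
      exact ((Nat.prime_two.coprime_iff_not_dvd).mpr hn1_odd).symm.dvd_of_dvd_mul_left hd
    have hcop2n1 : Nat.Coprime (2^α) n₁ :=
      Nat.Coprime.pow_left _ ((Nat.prime_two.coprime_iff_not_dvd).mpr hn1_odd)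
    have h2α_not : ¬ 2^α ∣ m := fun hd =>
      h2 (by rw [← hnfac]; exact hcop2n1.mul_dvd_of_dvd_of_dvd hd hn1_dvd_m)
    have h2αm1 : 2^(α-1) ∣ m := by
      have hd : 2^α ∣ 2*m := dvd_trans ⟨n₁, hnfac.symm⟩ h1
      have h2e : 2^α = 2 * 2^(α-1) := by rw [← pow_succ']; congr 1; omega
      rw [h2e] at hd
      exact (Nat.mul_dvd_mul_iff_left (by norm_num : 0 < 2)).mp hd
    have hmodZ : (2^α : ℤ) ∣ (m:ℤ) - 2^(α-1) := helper_mod α m hα_pos h2αm1 h2α_not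
    refine ⟨α, hα_pos, hν.symm, ?_, ?_⟩
    · rw [Nat.modEq_iff_dvd]
      have hTm : (T:ℤ) = (m:ℤ) - (k:ℤ)*s := by push_cast [hm_def]; ring
      have hd1 : ((2:ℤ)^(min β α)) ∣ (m:ℤ) - 2^(α-1) :=
        dvd_trans (pow_dvd_pow 2 (min_le_right β α)) hmodZ
      have hd2 : ((2:ℤ)^(min β α)) ∣ (k:ℤ)*s := by
        have hkk : ((2:ℤ)^β) ∣ (k:ℤ) := by
          exact_mod_cast Int.natCast_dvd_natCast.mpr ⟨k₁, hkfac.symm⟩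
        exact dvd_mul_of_dvd_left (dvd_trans (pow_dvd_pow 2 (min_le_left β α)) hkk) _
      have hd3 := dvd_sub hd2 hd1
      have heq : ((2:ℤ)^(α-1)) - (T:ℤ) = (k:ℤ)*s - ((m:ℤ) - 2^(α-1)) := by rw [hTm]; ring
      push_cast
      rw [heq]
      exact hd3
    · rw [← hn₁_def]
      have hd1 : Nat.gcd k₁ n₁ ∣ m := dvd_trans (Nat.gcd_dvd_right _ _) hn1_dvd_m
      have hd2 : Nat.gcd k₁ n₁ ∣ k * s :=
        dvd_mul_of_dvd_left (dvd_trans (Nat.gcd_dvd_left _ _) ⟨2^β, by rw [← hkfac]; ring⟩) s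
      have hd3 : Nat.gcd k₁ n₁ ∣ m - k*s := Nat.dvd_sub hd1 hd2
      rwa [show m - k*s = T by omega] at hd3
  · rintro ⟨α, hα_pos, hα_eq, hmod2, hgcd⟩
    have hαn : padicValNat 2 n = α := hν.trans hα_eq
    set n₁ := n / 2^α with hn₁_def
    have hnfac : 2^α * n₁ = n := by
      rw [hn₁_def, ← hαn, ← Nat.factorization_def n Nat.prime_two]
      exact Nat.ordProj_mul_ordCompl_eq_self n 2
    have hn1_odd : ¬ 2 ∣ n₁ := by
      rw [hn₁_def, ← hαn, ← Nat.factorization_def n Nat.prime_two]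
      exact Nat.not_dvd_ordCompl Nat.prime_two hn_pos.ne'
    have hgcd1 : (Int.gcd (k:ℤ) (n₁:ℤ) : ℤ) ∣ (-(T:ℤ)) := by
      rw [Int.gcd_natCast_natCast]
      refine dvd_neg.mpr (Int.natCast_dvd_natCast.mpr ?_)
      have hg_odd : ¬ 2 ∣ Nat.gcd k n₁ := fun h => hn1_odd (h.trans (Nat.gcd_dvd_right _ _))
      have hg_k1 : Nat.gcd k n₁ ∣ k₁ := by
        have hh : Nat.gcd k n₁ ∣ 2^β * k₁ := by rw [hkfac]; exact Nat.gcd_dvd_left _ _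
        exact (Nat.Coprime.pow_right β
          ((Nat.prime_two.coprime_iff_not_dvd).mpr hg_odd).symm).dvd_of_dvd_mul_left hh
      exact dvd_trans (Nat.dvd_gcd hg_k1 (Nat.gcd_dvd_right _ _)) hgcd
    obtain ⟨s₁, hs₁⟩ := lin_cong (k:ℤ) (n₁:ℤ) (-(T:ℤ)) hgcd1
    have hs₁' : (n₁:ℤ) ∣ (k:ℤ)*s₁ + T := by rwa [sub_neg_eq_add] at hs₁
    have hmin_dvd : ((2:ℤ)^(min β α)) ∣ ((2:ℤ)^(α-1) - T) := by
      have hh := (Nat.modEq_iff_dvd).mp hmod2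
      push_cast at hh ⊢
      exact hh
    have hgcd2 : (Int.gcd (k:ℤ) ((2^α : ℕ):ℤ) : ℤ) ∣ ((2:ℤ)^(α-1) - T) := by
      rw [Int.gcd_natCast_natCast]
      obtain ⟨γ, hγle, hγ⟩ := (Nat.dvd_prime_pow Nat.prime_two).mp (Nat.gcd_dvd_right k (2^α))
      rw [hγ]
      have hγβ : γ ≤ β := by
        have h2d : 2^γ ∣ k := hγ ▸ Nat.gcd_dvd_left k (2^α)
        have hh := (Nat.Prime.pow_dvd_iff_le_factorization Nat.prime_two hk_pos.ne').mp h2d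
        rwa [Nat.factorization_def k Nat.prime_two] at hh
      refine dvd_trans ?_ hmin_dvd
      have hh : (2:ℤ)^γ ∣ (2:ℤ)^(min β α) := pow_dvd_pow 2 (by omega)
      exact_mod_cast hh
    obtain ⟨s₂, hs₂⟩ := lin_cong (k:ℤ) ((2^α : ℕ):ℤ) _ hgcd2
    have hcop : IsCoprime ((n₁:ℕ):ℤ) ((2^α : ℕ):ℤ) := Nat.isCoprime_iff_coprime.mpr
      ((Nat.Coprime.pow_left α ((Nat.prime_two.coprime_iff_not_dvd).mpr hn1_odd)).symm)
    obtain ⟨s₀, hc1, hc2⟩ := crt_int (n₁:ℤ) ((2^α:ℕ):ℤ) s₁ s₂ hcop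
    have hm1 : (n₁:ℤ) ∣ (k:ℤ)*s₀ + T := by
      have hh : (k:ℤ)*s₀ + T = (k:ℤ)*(s₀ - s₁) + ((k:ℤ)*s₁ + T) := by ring
      rw [hh]; exact dvd_add (hc1.mul_left _) hs₁'
    have hm2 : ((2^α:ℕ):ℤ) ∣ (k:ℤ)*s₀ + T - 2^(α-1) := by
      have hh : (k:ℤ)*s₀ + T - 2^(α-1) = (k:ℤ)*(s₀ - s₂) + ((k:ℤ)*s₂ - ((2:ℤ)^(α-1) - T)) := by ring
      rw [hh]; exact dvd_add (hc2.mul_left _) hs₂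
    have hn1_pos : 0 < n₁ := by
      rcases Nat.eq_zero_or_pos n₁ with h0 | hgt
      · rw [h0, mul_zero] at hnfac; omega
      · exact hgt
    set L : ℕ := n₁ * 2^α with hL_def
    have hL_pos : 0 < L := Nat.mul_pos hn1_pos (Nat.pow_pos (by norm_num))
    set t : ℕ := s₀.natAbs + 1 with ht_def
    have hsZ_pos : (1:ℤ) ≤ s₀ + t * L := by
      have hh1 : -s₀ ≤ (s₀.natAbs : ℤ) := by rw [← Int.abs_eq_natAbs]; exact neg_le_abs s₀
      have hh2 : ((t:ℕ) : ℤ) ≤ ((t:ℕ) : ℤ) * L :=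
        le_mul_of_one_le_right (by positivity) (by exact_mod_cast hL_pos)
      push_cast at hh1 hh2 ⊢
      linarith
    set s : ℕ := (s₀ + t * L).toNat with hs_def
    have hsZ : (s:ℤ) = s₀ + t * L := Int.toNat_of_nonneg (by linarith)
    have hs_pos : 0 < s := by
      have hh : (1:ℤ) ≤ (s:ℤ) := by rw [hsZ]; exact hsZ_pos
      exact_mod_cast hh
    refine ⟨s, hs_pos, ?_⟩
    rw [hcrit, hcrit2]
    set m := k*s + T with hm_def
    have hLn1 : (n₁:ℤ) ∣ (L:ℤ) := Int.natCast_dvd_natCast.mpr ⟨2^α, hL_def⟩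
    have hL2α : ((2:ℤ))^α ∣ (L:ℤ) := by
      have : ((2^α : ℕ):ℤ) ∣ (L:ℤ) := Int.natCast_dvd_natCast.mpr ⟨n₁, by rw [hL_def]; ring⟩
      exact_mod_cast this
    have hmZ1 : (n₁:ℤ) ∣ (m:ℤ) := by
      have he1 : (m:ℤ) = ((k:ℤ)*s₀ + T) + (k:ℤ)*t*L := by push_cast [hm_def, hsZ]; ring
      rw [he1]; exact dvd_add hm1 (hLn1.mul_left _)
    have hmZ2 : ((2:ℤ)^α) ∣ (m:ℤ) - 2^(α-1) := by
      have he2 : (m:ℤ) - 2^(α-1) = ((k:ℤ)*s₀ + T - 2^(α-1)) + (k:ℤ)*t*L := by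
        push_cast [hm_def, hsZ]; ring
      rw [he2]
      refine dvd_add ?_ (hL2α.mul_left _)
      exact_mod_cast hm2
    have hm_natdvd : n₁ ∣ m := Int.natCast_dvd_natCast.mp hmZ1
    have hmZ2' : ((2^α : ℕ):ℤ) ∣ (m:ℤ) - 2^(α-1) := by exact_mod_cast hmZ2
    obtain ⟨hdvd_half, hnotdvd⟩ := helper_mod' α m hα_pos (by exact_mod_cast hmZ2)
    refine ⟨?_, ?_⟩
    · rw [← hnfac]
      refine (Nat.Coprime.pow_left α
        ((Nat.prime_two.coprime_iff_not_dvd).mpr hn1_odd)).mul_dvd_of_dvd_of_dvd ?_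
        (hm_natdvd.mul_left 2)
      obtain ⟨c, hc⟩ := hdvd_half
      have h2e : 2^α = 2 * 2^(α-1) := by rw [← pow_succ']; congr 1; omega
      exact ⟨c, by rw [hc, h2e]; ring⟩
    · intro hnd
      exact hnotdvd (dvd_trans ⟨n₁, hnfac.symm⟩ hnd)
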